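/- Suppose r ∈ ℓ²(ℤ) is nonnegative. Then for N ≥ 2: Σ_{n>N} Σ_{p≠±n} r(n+p)²/(n-p)² ≤ C·(‖r‖²/N + E_N(r)²) for an absolute constant C, where the inner index p runs over integers of the same parity as n. -/

import Mathlib

open scoped ENNReal

noncomputable def l2norm2 (r : ℤ → ℝ) : ℝ≥0∞ := ∑' k : ℤ, ENNReal.ofReal ((r k) ^ 2)

noncomputable def tailNorm2 (r : ℤ → ℝ) (N : ℕ) : ℝ≥0∞ :=
  ∑' k : {k : ℤ // (N : ℤ) ≤ |k|}, ENNReal.ofReal ((r k.1) ^ 2)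

lemma auxFin (N M : ℕ) (hN : 1 ≤ N) :
    ∑ i ∈ Finset.range M, (1:ℝ)/(((N + i : ℕ)):ℝ)^2 ≤ 2/N := by
  have key : ∀ i ∈ Finset.range M, (1:ℝ)/(((N + i : ℕ)):ℝ)^2 ≤
      (fun j => 2/((N + j : ℕ):ℝ)) i - (fun j => 2/((N + j : ℕ):ℝ)) (i+1) := by
    intro i _
    have h1 : (1:ℝ) ≤ ((N + i : ℕ):ℝ) := by exact_mod_cast Nat.le_add_right_of_le hN
    have h2 : ((N + (i+1) : ℕ):ℝ) = ((N + i : ℕ):ℝ) + 1 := by push_cast; ring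
    simp only [h2]
    rw [div_sub_div _ _ (by linarith) (by linarith), div_le_div_iff₀ (by positivity) (by positivity)]
    nlinarith
  calc ∑ i ∈ Finset.range M, (1:ℝ)/(((N + i : ℕ)):ℝ)^2
      ≤ ∑ i ∈ Finset.range M, ((fun j => 2/((N + j : ℕ):ℝ)) i - (fun j => 2/((N + j : ℕ):ℝ)) (i+1)) :=
        Finset.sum_le_sum key
    _ = 2/((N + 0 : ℕ):ℝ) - 2/((N + M : ℕ):ℝ) := Finset.sum_range_sub' _ M
    _ ≤ 2/N := by
        have : (0:ℝ) ≤ 2/((N + M : ℕ):ℝ) := by positivity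
        simp only [Nat.add_zero]
        linarith

lemma natTail (N : ℕ) (hN : 1 ≤ N) :
    ∑' m : ℕ, (if N ≤ m then ENNReal.ofReal (1/((m:ℝ))^2) else 0) ≤ ENNReal.ofReal (2/N) := by
  classical
  rw [ENNReal.tsum_eq_iSup_sum]
  apply iSup_le
  intro s
  set K := (s.sup id) + 1 with hK
  have hfil : ∑ m ∈ s, (if N ≤ m then ENNReal.ofReal (1/((m:ℝ))^2) else 0)
      = ∑ m ∈ s.filter (fun m => N ≤ m), (if N ≤ m then ENNReal.ofReal (1/((m:ℝ))^2) else 0) :=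
    (Finset.sum_filter_of_ne (fun x _ hx => by by_contra h; simp [h] at hx)).symm
  rw [hfil]
  have hsub : s.filter (fun m => N ≤ m) ⊆ Finset.Ico N K := by
    intro m hm
    rw [Finset.mem_filter] at hm
    rw [Finset.mem_Ico]
    exact ⟨hm.2, by have := Finset.le_sup (f := id) hm.1; simp only [id_eq] at this; omega⟩
  calc ∑ m ∈ s.filter (fun m => N ≤ m), (if N ≤ m then ENNReal.ofReal (1/((m:ℝ))^2) else 0)
      ≤ ∑ m ∈ Finset.Ico N K, (if N ≤ m then ENNReal.ofReal (1/((m:ℝ))^2) else 0) :=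
        Finset.sum_le_sum_of_subset hsub
    _ = ∑ m ∈ Finset.Ico N K, ENNReal.ofReal (1/((m:ℝ))^2) := by
        apply Finset.sum_congr rfl
        intro m hm
        rw [Finset.mem_Ico] at hm
        rw [if_pos hm.1]
    _ = ENNReal.ofReal (∑ m ∈ Finset.Ico N K, 1/((m:ℝ))^2) :=
        (ENNReal.ofReal_sum_of_nonneg (fun i _ => by positivity)).symm
    _ ≤ ENNReal.ofReal (2/N) := by
        apply ENNReal.ofReal_le_ofReal
        rw [Finset.sum_Ico_eq_sum_range]
        exact auxFin N (K - N) hN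

lemma intTail (N : ℕ) (hN : 1 ≤ N) :
    ∑' m : ℤ, (if (N:ℤ) ≤ |m| then ENNReal.ofReal (1/((m:ℝ))^2) else 0) ≤ ENNReal.ofReal (4/N) := by
  rw [tsum_of_nat_of_neg_add_one ENNReal.summable ENNReal.summable]
  have hsum : ENNReal.ofReal (2/(N:ℝ)) + ENNReal.ofReal (2/(N:ℝ)) = ENNReal.ofReal (4/(N:ℝ)) := by
    rw [← ENNReal.ofReal_add (by positivity) (by positivity)]
    ring_nf
  refine le_trans (add_le_add ?_ ?_) hsum.le
  · refine le_trans (le_of_eq (tsum_congr fun n => ?_)) (natTail N hN)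
    simp [Nat.abs_cast]
  · refine le_trans (le_of_eq (tsum_congr fun n => ?_))
      (le_trans (ENNReal.tsum_comp_le_tsum_of_injective (f := fun n : ℕ => n + 1)
        (fun a b h => by simpa using h)
        (fun m : ℕ => if N ≤ m then ENNReal.ofReal (1/((m:ℝ))^2) else 0)) (natTail N hN))
    show _ = if N ≤ n + 1 then ENNReal.ofReal (1/(((n+1:ℕ)):ℝ)^2) else 0
    refine if_congr ?_ ?_ rfl
    · rw [abs_neg, abs_of_nonneg (by positivity : (0:ℤ) ≤ (n:ℤ) + 1)]
      omega
    · congr 1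
      push_cast
      ring

/-- There is an absolute constant `C` such that for every nonnegative `r ∈ ℓ²(ℤ)` and `N ≥ 2`:
`Σ_{n>N} Σ_{p≠±n, p ≡ n (2)} r(n+p)²/(n-p)² ≤ C (‖r‖²/N + E_N(r)²)`. -/
theorem stmt16 : ∃ C : ℝ, 0 < C ∧ ∀ r : ℤ → ℝ, (∀ k, 0 ≤ r k) →
    Summable (fun k => (r k) ^ 2) → ∀ N : ℕ, 2 ≤ N →
    ∑' n : {n : ℤ // (N : ℤ) < n},
      ∑' p : {p : ℤ // p ≠ n.1 ∧ p ≠ -n.1 ∧ (n.1 - p) % 2 = 0},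
      ENNReal.ofReal ((r (n.1 + p.1)) ^ 2 / ((n.1 : ℝ) - (p.1 : ℝ)) ^ 2)
    ≤ ENNReal.ofReal C * (l2norm2 r / (N : ℝ≥0∞) + tailNorm2 r N) := by
  classical
  refine ⟨4, by norm_num, ?_⟩
  intro r hr _ N hN
  have hN0 : (0:ℝ) < (N:ℝ) := by
    have : 0 < N := by omega
    exact_mod_cast this
  set G : ℤ × ℤ → ℝ≥0∞ := fun km =>
    ENNReal.ofReal ((r km.1)^2) *
      (if ((N:ℤ) ≤ |km.1| ∨ (N:ℤ) < |km.2|) ∧ km.2 ≠ 0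
        then ENNReal.ofReal (1/((km.2:ℝ))^2) else 0) with hG
  have hinj : Function.Injective
      (fun x : (Σ n : {n : ℤ // (N:ℤ) < n},
          {p : ℤ // p ≠ n.1 ∧ p ≠ -n.1 ∧ (n.1 - p) % 2 = 0}) =>
        ((x.1.1 + x.2.1, x.1.1 - x.2.1) : ℤ × ℤ)) := by
    rintro ⟨⟨n₁, hn₁⟩, ⟨p₁, hp₁⟩⟩ ⟨⟨n₂, hn₂⟩, ⟨p₂, hp₂⟩⟩ h
    simp only [Prod.mk.injEq] at h
    obtain ⟨h1, h2⟩ := h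
    have e1 : n₁ = n₂ := by omega
    subst e1
    have e2 : p₁ = p₂ := by omega
    subst e2
    rfl
  have step1 : ∑' n : {n : ℤ // (N : ℤ) < n},
      ∑' p : {p : ℤ // p ≠ n.1 ∧ p ≠ -n.1 ∧ (n.1 - p) % 2 = 0},
      ENNReal.ofReal ((r (n.1 + p.1)) ^ 2 / ((n.1 : ℝ) - (p.1 : ℝ)) ^ 2)
      ≤ ∑' km : ℤ × ℤ, G km := by
    have hsig := ENNReal.tsum_sigma'
      (f := fun x : (Σ n : {n : ℤ // (N:ℤ) < n},
          {p : ℤ // p ≠ n.1 ∧ p ≠ -n.1 ∧ (n.1 - p) % 2 = 0}) =>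
        ENNReal.ofReal ((r (x.1.1 + x.2.1)) ^ 2 / ((x.1.1 : ℝ) - (x.2.1 : ℝ)) ^ 2))
    rw [← hsig]
    refine le_trans (ENNReal.tsum_le_tsum ?_) (ENNReal.tsum_comp_le_tsum_of_injective hinj G)
    rintro ⟨⟨n, hn⟩, ⟨p, hp1, hp2, hp3⟩⟩
    have hp1' : p ≠ n := hp1
    simp only [hG]
    have hcond : ((N:ℤ) ≤ |n + p| ∨ (N:ℤ) < |n - p|) ∧ n - p ≠ 0 := by
      constructor
      · by_cases h : (N:ℤ) ≤ |n + p|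
        · exact Or.inl h
        · right
          rw [not_le, abs_lt] at h
          have : (N:ℤ) < n - p := by
            have hn' : (N:ℤ) < n := hn
            omega
          exact lt_of_lt_of_le this (le_abs_self _)
      · exact fun hc => hp1' (by omega)
    rw [if_pos hcond, ← ENNReal.ofReal_mul (sq_nonneg _)]
    apply le_of_eq
    congr 1
    push_cast
    ring
  have hinner : ∀ k : ℤ, (∑' m : ℤ, G (k, m)) ≤
      ENNReal.ofReal ((r k)^2) * ENNReal.ofReal (4/(N:ℝ)) +
        4 * (if (N:ℤ) ≤ |k| then ENNReal.ofReal ((r k)^2) else 0) := by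
    intro k
    have hfac : (∑' m : ℤ, G (k, m)) = ENNReal.ofReal ((r k)^2) *
        ∑' m : ℤ, (if ((N:ℤ) ≤ |k| ∨ (N:ℤ) < |m|) ∧ m ≠ 0
          then ENNReal.ofReal (1/((m:ℝ))^2) else 0) := by
      simp only [hG]
      rw [ENNReal.tsum_mul_left]
    rw [hfac]
    by_cases hk : (N:ℤ) ≤ |k|
    · have h4 := intTail 1 le_rfl
      have hS : (∑' m : ℤ, (if ((N:ℤ) ≤ |k| ∨ (N:ℤ) < |m|) ∧ m ≠ 0
          then ENNReal.ofReal (1/((m:ℝ))^2) else 0)) ≤ ENNReal.ofReal 4 := by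
        refine le_trans (ENNReal.tsum_le_tsum fun m => ?_) (le_trans h4 ?_)
        · split_ifs with h1 h2
          · exact le_rfl
          · exact absurd (by simpa using Int.one_le_abs h1.2) h2
          · exact zero_le
          · exact le_rfl
        · apply ENNReal.ofReal_le_ofReal
          norm_num
      calc ENNReal.ofReal ((r k)^2) * _ ≤ ENNReal.ofReal ((r k)^2) * ENNReal.ofReal 4 :=
            mul_le_mul_right hS _
        _ = 4 * (if (N:ℤ) ≤ |k| then ENNReal.ofReal ((r k)^2) else 0) := by
            rw [if_pos hk, mul_comm, ENNReal.ofReal_ofNat]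
        _ ≤ _ := le_add_self
    · have hS : (∑' m : ℤ, (if ((N:ℤ) ≤ |k| ∨ (N:ℤ) < |m|) ∧ m ≠ 0
          then ENNReal.ofReal (1/((m:ℝ))^2) else 0)) ≤ ENNReal.ofReal (4/(N:ℝ)) := by
        refine le_trans (ENNReal.tsum_le_tsum fun m => ?_)
          (le_trans (intTail (N+1) (by omega)) ?_)
        · split_ifs with h1 h2
          · exact le_rfl
          · exfalso
            rcases h1.1 with h | h
            · exact hk h
            · push_cast at h2; omega
          · exact zero_le
          · exact le_rfl
        · apply ENNReal.ofReal_le_ofReal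
          rw [div_le_div_iff₀ (by positivity) hN0]
          push_cast
          nlinarith
      calc ENNReal.ofReal ((r k)^2) * _ ≤ ENNReal.ofReal ((r k)^2) * ENNReal.ofReal (4/(N:ℝ)) :=
            mul_le_mul_right hS _
        _ ≤ _ := self_le_add_right _ _
  have htail : tailNorm2 r N = ∑' k : ℤ, (if (N:ℤ) ≤ |k| then ENNReal.ofReal ((r k)^2) else 0) := by
    refine Eq.trans (tsum_subtype {k : ℤ | (N:ℤ) ≤ |k|} (fun k => ENNReal.ofReal ((r k)^2))) ?_
    refine tsum_congr fun k => ?_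
    by_cases h : (N:ℤ) ≤ |k|
    · rw [Set.indicator_of_mem (show k ∈ {k : ℤ | (N:ℤ) ≤ |k|} from h), if_pos h]
    · rw [Set.indicator_of_notMem (show k ∉ {k : ℤ | (N:ℤ) ≤ |k|} from h), if_neg h]
  have step2 : (∑' km : ℤ × ℤ, G km) ≤
      ENNReal.ofReal (4/(N:ℝ)) * l2norm2 r + 4 * tailNorm2 r N := by
    rw [ENNReal.tsum_prod']
    calc (∑' k : ℤ, ∑' m : ℤ, G (k, m))
        ≤ ∑' k : ℤ, (ENNReal.ofReal ((r k)^2) * ENNReal.ofReal (4/(N:ℝ)) +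
            4 * (if (N:ℤ) ≤ |k| then ENNReal.ofReal ((r k)^2) else 0)) :=
          ENNReal.tsum_le_tsum hinner
      _ = (∑' k : ℤ, ENNReal.ofReal ((r k)^2) * ENNReal.ofReal (4/(N:ℝ))) +
            ∑' k : ℤ, 4 * (if (N:ℤ) ≤ |k| then ENNReal.ofReal ((r k)^2) else 0) :=
          ENNReal.tsum_add
      _ = ENNReal.ofReal (4/(N:ℝ)) * l2norm2 r + 4 * tailNorm2 r N := by
          rw [ENNReal.tsum_mul_right, ENNReal.tsum_mul_left, htail, mul_comm]
          rfl
  refine le_trans (le_trans step1 step2) ?_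
  have hdiv : ENNReal.ofReal (4/(N:ℝ)) = ENNReal.ofReal 4 / (N : ℝ≥0∞) := by
    rw [ENNReal.ofReal_div_of_pos hN0, ENNReal.ofReal_natCast]
  rw [mul_add, hdiv, div_eq_mul_inv, div_eq_mul_inv, mul_assoc,
    mul_comm ((N:ℝ≥0∞))⁻¹]
  apply add_le_add le_rfl
  apply le_of_eq
  norm_num [ENNReal.ofReal_ofNat]
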